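/- A finite relevant collection F of finite sets is an hke collection if and only if for every subcollection Γ ⊆ F with |Γ| ≥ 2, there exists some partition {Γ₁,Γ₂} of Γ into two non-empty subcollections such that |⋂Γ₁ − ⋃Γ₂| = |⋂Γ₂ − ⋃Γ₁|. -/

import Mathlib

open Finset

/-- Union of a finite collection of finite sets. -/
def collU {α : Type*} [DecidableEq α] (Γ : Finset (Finset α)) : Finset α :=
  Γ.sup id

/-- Intersection of a finite collection of finite sets
(equals the usual intersection when the collection is non-empty). -/
def collI {α : Type*} [DecidableEq α] (Γ : Finset (Finset α)) : Finset α :=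
  (Γ.sup id).filter (fun x => ∀ S ∈ Γ, x ∈ S)

/-- `e Γ = |⋃Γ| + |⋂Γ|` as an integer. -/
def collE {α : Type*} [DecidableEq α] (Γ : Finset (Finset α)) : ℤ :=
  (collU Γ).card + (collI Γ).card

/-- `F` is a hereditary König–Egerváry collection with common cardinality `a`. -/
def IsHKE {α : Type*} [DecidableEq α] (F : Finset (Finset α)) (a : ℕ) : Prop :=
  (∀ S ∈ F, S.card = a) ∧
  ∀ Γ ⊆ F, Γ.Nonempty → collE Γ = 2 * (a : ℤ)

section HKEAux

variable {α : Type*} [DecidableEq α]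

lemma mem_collU {Γ : Finset (Finset α)} {x : α} : x ∈ collU Γ ↔ ∃ S ∈ Γ, x ∈ S := by
  simp [collU, Finset.mem_sup]

lemma mem_collI {Γ : Finset (Finset α)} (h : Γ.Nonempty) {x : α} :
    x ∈ collI Γ ↔ ∀ S ∈ Γ, x ∈ S := by
  obtain ⟨T, hT⟩ := h
  simp only [collI, mem_filter, Finset.mem_sup, id]
  exact ⟨fun h => h.2, fun h => ⟨⟨T, hT, h T hT⟩, h⟩⟩

lemma collU_singleton (S : Finset α) : collU {S} = S := by simp [collU]

lemma collI_singleton (S : Finset α) : collI {S} = S := by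
  ext x; simp [mem_collI (singleton_nonempty S)]

lemma collE_singleton (S : Finset α) : collE {S} = 2 * (S.card : ℤ) := by
  simp [collE, collU_singleton, collI_singleton]; ring

lemma collU_insert (S : Finset α) (Γ : Finset (Finset α)) :
    collU (insert S Γ) = S ∪ collU Γ := by
  simp [collU, Finset.sup_insert]

lemma collI_insert (S : Finset α) {Γ : Finset (Finset α)} (h : Γ.Nonempty) :
    collI (insert S Γ) = S ∩ collI Γ := by
  ext x
  simp only [mem_collI (insert_nonempty S Γ), mem_collI h, mem_inter, mem_insert]
  constructor
  · intro hx; exact ⟨hx S (Or.inl rfl), fun T hT => hx T (Or.inr hT)⟩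
  · rintro ⟨h1, h2⟩ T (rfl | hT); exacts [h1, h2 T hT]

lemma collE_insert (S : Finset α) {Γ : Finset (Finset α)} (h : Γ.Nonempty) :
    collE (insert S Γ) = collE Γ + ((S \ collU Γ).card : ℤ) - ((collI Γ \ S).card : ℤ) := by
  have h1 : (S \ collU Γ).card + (collU Γ).card = (S ∪ collU Γ).card :=
    card_sdiff_add_card S (collU Γ)
  have h2 : (collI Γ \ S).card + (collI Γ ∩ S).card = (collI Γ).card :=
    card_sdiff_add_card_inter (collI Γ) S
  simp only [collE, collU_insert, collI_insert S h, inter_comm S (collI Γ)]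
  push_cast [← h1, ← h2]
  ring

lemma hkeInnerSum {P Q : Finset (Finset α)} (hQ : Q ⊆ P) :
    ∑ Θ ∈ P.powerset, (-1:ℤ)^Θ.card * (if Θ ⊆ Q then 1 else 0) = if Q = ∅ then 1 else 0 := by
  have hsub : Q.powerset ⊆ P.powerset := powerset_mono.2 hQ
  have h0 : ∀ Θ ∈ P.powerset, Θ ∉ Q.powerset →
      (-1:ℤ)^Θ.card * (if Θ ⊆ Q then 1 else 0) = 0 := by
    intro Θ _ hn
    rw [if_neg (fun hs => hn (mem_powerset.2 hs)), mul_zero]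
  rw [← Finset.sum_subset hsub h0]
  rw [← Finset.sum_powerset_neg_one_pow_card (x := Q)]
  apply sum_congr rfl
  intro Θ hΘ
  rw [if_pos (mem_powerset.1 hΘ), mul_one]

omit [DecidableEq α] in
lemma card_filter_int (s : Finset α) (p : α → Prop) [DecidablePred p] :
    (((s.filter p).card : ℤ)) = ∑ x ∈ s, if p x then (1:ℤ) else 0 := by
  rw [card_filter]
  push_cast
  apply sum_congr rfl
  intro x _
  split_ifs <;> simp

lemma hkeAltA (Γ₁ P : Finset (Finset α)) (S : Finset α) :
    ∑ Θ ∈ P.powerset, (-1:ℤ)^Θ.card * ((S \ collU (Γ₁ ∪ Θ)).card : ℤ)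
    = ((collI (insert S P) \ collU Γ₁).card : ℤ) := by
  have hset : ∀ Θ : Finset (Finset α),
      S \ collU (Γ₁ ∪ Θ) = S.filter (fun x => x ∉ collU Γ₁ ∧ ∀ T ∈ Θ, x ∉ T) := by
    intro Θ
    ext x
    simp only [mem_sdiff, mem_filter, mem_collU, mem_union]
    push_neg
    constructor
    · rintro ⟨hxS, hall⟩
      refine ⟨hxS, ?_, fun T hT => hall T (Or.inr hT)⟩
      · intro T hT
        exact hall T (Or.inl hT)
    · rintro ⟨hxS, hU, hall⟩
      refine ⟨hxS, ?_⟩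
      rintro T (hT | hT)
      · exact hU T hT
      · exact hall T hT
  have hcard : ∀ Θ : Finset (Finset α),
      ((S \ collU (Γ₁ ∪ Θ)).card : ℤ)
        = ∑ x ∈ S, (if x ∉ collU Γ₁ ∧ ∀ T ∈ Θ, x ∉ T then (1:ℤ) else 0) := by
    intro Θ
    rw [hset Θ, card_filter_int]
  calc ∑ Θ ∈ P.powerset, (-1:ℤ)^Θ.card * ((S \ collU (Γ₁ ∪ Θ)).card : ℤ)
      = ∑ x ∈ S, ∑ Θ ∈ P.powerset, (-1:ℤ)^Θ.card *
          (if x ∉ collU Γ₁ ∧ ∀ T ∈ Θ, x ∉ T then (1:ℤ) else 0) := by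
        rw [sum_comm]
        apply sum_congr rfl
        intro Θ _
        rw [hcard Θ, mul_sum]
    _ = ∑ x ∈ S, (if x ∉ collU Γ₁ ∧ ∀ T ∈ P, x ∈ T then (1:ℤ) else 0) := by
        apply sum_congr rfl
        intro x _
        by_cases hx : x ∈ collU Γ₁
        · rw [if_neg (by tauto)]
          apply sum_eq_zero
          intro Θ _
          rw [if_neg (by tauto), mul_zero]
        · have hQ : P.filter (fun T => x ∉ T) ⊆ P := filter_subset _ _
          have := hkeInnerSum hQ
          calc ∑ Θ ∈ P.powerset, (-1:ℤ)^Θ.card *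
                  (if x ∉ collU Γ₁ ∧ ∀ T ∈ Θ, x ∉ T then (1:ℤ) else 0)
              = ∑ Θ ∈ P.powerset, (-1:ℤ)^Θ.card *
                  (if Θ ⊆ P.filter (fun T => x ∉ T) then (1:ℤ) else 0) := by
                apply sum_congr rfl
                intro Θ hΘ
                have hΘP := mem_powerset.1 hΘ
                congr 1
                have : (Θ ⊆ P.filter (fun T => x ∉ T)) ↔ (∀ T ∈ Θ, x ∉ T) := by
                  constructor
                  · intro hs T hT
                    exact (mem_filter.1 (hs hT)).2
                  · intro hall T hT
                    exact mem_filter.2 ⟨hΘP hT, hall T hT⟩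
                simp only [this, hx, not_false_iff, true_and]
            _ = if P.filter (fun T => x ∉ T) = ∅ then 1 else 0 := this
            _ = if x ∉ collU Γ₁ ∧ ∀ T ∈ P, x ∈ T then (1:ℤ) else 0 := by
                have : (P.filter (fun T => x ∉ T) = ∅) ↔ (∀ T ∈ P, x ∈ T) := by
                  rw [filter_eq_empty_iff]
                  push_neg
                  rfl
                simp only [this, hx, not_false_iff, true_and]
    _ = ((collI (insert S P) \ collU Γ₁).card : ℤ) := by
        have : collI (insert S P) \ collU Γ₁
            = S.filter (fun x => x ∉ collU Γ₁ ∧ ∀ T ∈ P, x ∈ T) := by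
          ext x
          simp only [mem_sdiff, mem_filter, mem_collI (insert_nonempty S P), mem_insert]
          constructor
          · rintro ⟨hall, hU⟩
            exact ⟨hall S (Or.inl rfl), hU, fun T hT => hall T (Or.inr hT)⟩
          · rintro ⟨hS, hU, hall⟩
            exact ⟨by rintro T (rfl | hT); exacts [hS, hall T hT], hU⟩
        rw [this, card_filter_int]

lemma hkeAltB (Γ₁ P : Finset (Finset α)) (S : Finset α) (h₁ : Γ₁.Nonempty) :
    ∑ Θ ∈ P.powerset, (-1:ℤ)^Θ.card * ((collI (Γ₁ ∪ Θ) \ S).card : ℤ)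
    = ((collI Γ₁ \ collU (insert S P)).card : ℤ) := by
  have hne : ∀ Θ : Finset (Finset α), (Γ₁ ∪ Θ).Nonempty := by
    intro Θ
    obtain ⟨T0, hT0⟩ := h₁
    exact ⟨T0, mem_union_left _ hT0⟩
  have hset : ∀ Θ : Finset (Finset α),
      collI (Γ₁ ∪ Θ) \ S = (collI Γ₁ \ S).filter (fun x => ∀ T ∈ Θ, x ∈ T) := by
    intro Θ
    ext x
    simp only [mem_sdiff, mem_filter, mem_collI (hne Θ), mem_collI h₁, mem_union]
    constructor
    · rintro ⟨hall, hxS⟩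
      exact ⟨⟨fun T hT => hall T (Or.inl hT), hxS⟩, fun T hT => hall T (Or.inr hT)⟩
    · rintro ⟨⟨h1, hxS⟩, h2⟩
      refine ⟨?_, hxS⟩
      rintro T (hT | hT)
      · exact h1 T hT
      · exact h2 T hT
  calc ∑ Θ ∈ P.powerset, (-1:ℤ)^Θ.card * ((collI (Γ₁ ∪ Θ) \ S).card : ℤ)
      = ∑ x ∈ collI Γ₁ \ S, ∑ Θ ∈ P.powerset, (-1:ℤ)^Θ.card *
          (if ∀ T ∈ Θ, x ∈ T then (1:ℤ) else 0) := by
        rw [sum_comm]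
        apply sum_congr rfl
        intro Θ _
        rw [hset Θ, card_filter_int, mul_sum]
    _ = ∑ x ∈ collI Γ₁ \ S, (if ∀ T ∈ P, x ∉ T then (1:ℤ) else 0) := by
        apply sum_congr rfl
        intro x _
        have hQ : P.filter (fun T => x ∈ T) ⊆ P := filter_subset _ _
        calc ∑ Θ ∈ P.powerset, (-1:ℤ)^Θ.card * (if ∀ T ∈ Θ, x ∈ T then (1:ℤ) else 0)
            = ∑ Θ ∈ P.powerset, (-1:ℤ)^Θ.card *
                (if Θ ⊆ P.filter (fun T => x ∈ T) then (1:ℤ) else 0) := by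
              apply sum_congr rfl
              intro Θ hΘ
              have hΘP := mem_powerset.1 hΘ
              congr 1
              have : (Θ ⊆ P.filter (fun T => x ∈ T)) ↔ (∀ T ∈ Θ, x ∈ T) := by
                constructor
                · intro hs T hT
                  exact (mem_filter.1 (hs hT)).2
                · intro hall T hT
                  exact mem_filter.2 ⟨hΘP hT, hall T hT⟩
              simp only [this]
          _ = if P.filter (fun T => x ∈ T) = ∅ then 1 else 0 := hkeInnerSum hQ
          _ = if ∀ T ∈ P, x ∉ T then (1:ℤ) else 0 := by
              have : (P.filter (fun T => x ∈ T) = ∅) ↔ (∀ T ∈ P, x ∉ T) := by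
                rw [filter_eq_empty_iff]
              simp only [this]
    _ = ((collI Γ₁ \ collU (insert S P)).card : ℤ) := by
        have : collI Γ₁ \ collU (insert S P)
            = (collI Γ₁ \ S).filter (fun x => ∀ T ∈ P, x ∉ T) := by
          ext x
          simp only [mem_sdiff, mem_filter, mem_collU, mem_insert]
          push_neg
          constructor
          · rintro ⟨hI, hall⟩
            refine ⟨⟨hI, ?_⟩, ?_⟩
            · intro hxS
              exact hall S (Or.inl rfl) hxS
            · intro T hT
              exact hall T (Or.inr hT)
          · rintro ⟨⟨hI, hxS⟩, hall⟩
            refine ⟨hI, ?_⟩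
            rintro T (rfl | hT)
            · exact hxS
            · exact hall T hT
        rw [this, card_filter_int]

/-- Key identity: for a partition `{Γ₁, Γ₂}` of `Γ` into non-empty parts, if every
proper non-empty subcollection of `Γ` has `collE = 2a`, then the imbalance of the
partition equals `±(collE Γ - 2a)`. -/
lemma hkeMain (Γ₁ Γ₂ : Finset (Finset α)) (a : ℕ)
    (h₁ : Γ₁.Nonempty) (h₂ : Γ₂.Nonempty) (hd : Disjoint Γ₁ Γ₂)
    (hsub : ∀ Δ ⊆ Γ₁ ∪ Γ₂, Δ.Nonempty → Δ ≠ Γ₁ ∪ Γ₂ → collE Δ = 2*(a:ℤ)) :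
    ((collI Γ₂ \ collU Γ₁).card : ℤ) - ((collI Γ₁ \ collU Γ₂).card : ℤ)
      = (-1:ℤ)^(Γ₂.card - 1) * (collE (Γ₁ ∪ Γ₂) - 2*(a:ℤ)) := by
  obtain ⟨S, hS⟩ := h₂
  set P := Γ₂.erase S with hPdef
  have hins : insert S P = Γ₂ := insert_erase hS
  have hSP : S ∉ P := notMem_erase S Γ₂
  have hSΓ₁ : S ∉ Γ₁ := fun h => (disjoint_left.1 hd h) hS
  have hPcard : P.card = Γ₂.card - 1 := card_erase_of_mem hS
  have halt : ∑ Θ ∈ P.powerset, (-1:ℤ)^Θ.card *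
        (((S \ collU (Γ₁ ∪ Θ)).card : ℤ) - ((collI (Γ₁ ∪ Θ) \ S).card : ℤ))
      = ((collI Γ₂ \ collU Γ₁).card : ℤ) - ((collI Γ₁ \ collU Γ₂).card : ℤ) := by
    rw [← hins]
    rw [show ∀ f g : Finset (Finset α) → ℤ, ∑ Θ ∈ P.powerset, (-1:ℤ)^Θ.card * (f Θ - g Θ)
        = ∑ Θ ∈ P.powerset, (-1:ℤ)^Θ.card * f Θ - ∑ Θ ∈ P.powerset, (-1:ℤ)^Θ.card * g Θ
      from fun f g => by rw [← sum_sub_distrib]; apply sum_congr rfl; intros; ring]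
    rw [hkeAltA Γ₁ P S, hkeAltB Γ₁ P S h₁]
  have hterm : ∀ Θ ∈ P.powerset, (-1:ℤ)^Θ.card *
        (((S \ collU (Γ₁ ∪ Θ)).card : ℤ) - ((collI (Γ₁ ∪ Θ) \ S).card : ℤ))
      = if Θ = P then (-1:ℤ)^P.card * (collE (Γ₁ ∪ Γ₂) - 2*(a:ℤ)) else 0 := by
    intro Θ hΘ
    have hΘP := mem_powerset.1 hΘ
    obtain ⟨T0, hT0⟩ := h₁
    have hneΓΘ : (Γ₁ ∪ Θ).Nonempty := ⟨T0, mem_union_left _ hT0⟩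
    have hdiff : ((S \ collU (Γ₁ ∪ Θ)).card : ℤ) - ((collI (Γ₁ ∪ Θ) \ S).card : ℤ)
        = collE (insert S (Γ₁ ∪ Θ)) - collE (Γ₁ ∪ Θ) := by
      rw [collE_insert S hneΓΘ]; ring
    have hPsub : P ⊆ Γ₂ := erase_subset S Γ₂
    have hsubUni : Γ₁ ∪ Θ ⊆ Γ₁ ∪ Γ₂ := union_subset_union_right (hΘP.trans hPsub)
    have hEΘ : collE (Γ₁ ∪ Θ) = 2*(a:ℤ) := by
      apply hsub _ hsubUni hneΓΘ
      intro hEq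
      have hSin : S ∈ Γ₁ ∪ Θ := by
        rw [hEq]; exact mem_union_right _ hS
      rcases mem_union.1 hSin with h' | h'
      · exact hSΓ₁ h'
      · exact hSP (hΘP h')
    by_cases hcase : Θ = P
    · rw [if_pos hcase]
      rw [hcase] at hdiff hEΘ ⊢
      rw [hdiff, hEΘ, show insert S (Γ₁ ∪ P) = Γ₁ ∪ Γ₂ from by rw [← hins, union_insert]]
    · rw [if_neg hcase, hdiff]
      have hex : ∃ T ∈ P, T ∉ Θ := by
        by_contra hcon
        push_neg at hcon
        exact hcase (subset_antisymm hΘP (fun T hT => hcon T hT))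
      obtain ⟨T, hTP, hTΘ⟩ := hex
      have hEins : collE (insert S (Γ₁ ∪ Θ)) = 2*(a:ℤ) := by
        apply hsub
        · exact insert_subset (mem_union_right _ hS) hsubUni
        · exact insert_nonempty _ _
        · intro hEq
          have hTin : T ∈ insert S (Γ₁ ∪ Θ) := by
            rw [hEq]; exact mem_union_right _ (hPsub hTP)
          rcases mem_insert.1 hTin with rfl | hTin
          · exact hSP hTP
          · rcases mem_union.1 hTin with h' | h'
            · exact (disjoint_left.1 hd h') (hPsub hTP)
            · exact hTΘ h'
      rw [hEins, hEΘ, sub_self, mul_zero]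
  rw [← halt, sum_congr rfl hterm, Finset.sum_ite_eq' P.powerset P
      (fun _ => (-1:ℤ)^P.card * (collE (Γ₁ ∪ Γ₂) - 2*(a:ℤ))),
    if_pos (mem_powerset_self P), hPcard]

end HKEAux

theorem stmt_12 {α : Type*} [DecidableEq α] (F : Finset (Finset α))
    (a : ℕ) (ha : 0 < a) (hsize : ∀ S ∈ F, S.card = a) :
    IsHKE F a ↔
      ∀ Γ ⊆ F, 2 ≤ Γ.card →
        ∃ Γ₁ Γ₂ : Finset (Finset α),
          Γ₁ ∪ Γ₂ = Γ ∧ Disjoint Γ₁ Γ₂ ∧ Γ₁.Nonempty ∧ Γ₂.Nonempty ∧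
          (collI Γ₁ \ collU Γ₂).card = (collI Γ₂ \ collU Γ₁).card := by
  constructor
  · intro hke Γ hΓF hcard
    have hne : Γ.Nonempty := card_pos.1 (by omega)
    obtain ⟨S, hS⟩ := hne
    have herasene : (Γ.erase S).Nonempty := by
      rw [← card_pos, card_erase_of_mem hS]; omega
    have hunion : Γ.erase S ∪ {S} = Γ := by
      rw [union_comm, ← insert_eq, insert_erase hS]
    have hdisj : Disjoint (Γ.erase S) {S} := by
      simp [disjoint_singleton_right]
    have hsub : ∀ Δ ⊆ Γ.erase S ∪ {S}, Δ.Nonempty → Δ ≠ Γ.erase S ∪ {S} →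
        collE Δ = 2*(a:ℤ) := by
      intro Δ hΔ hΔne _
      exact hke.2 Δ (hΔ.trans (by rw [hunion]; exact hΓF)) hΔne
    have := hkeMain (Γ.erase S) {S} a herasene (singleton_nonempty S) hdisj hsub
    rw [hunion] at this
    rw [hke.2 Γ hΓF ⟨S, hS⟩] at this
    refine ⟨Γ.erase S, {S}, hunion, hdisj, herasene, singleton_nonempty S, ?_⟩
    have h0 : ((collI {S} \ collU (Γ.erase S)).card : ℤ)
        - ((collI (Γ.erase S) \ collU {S}).card : ℤ) = 0 := by
      rw [this]; ring
    omega
  · intro hbal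
    refine ⟨hsize, ?_⟩
    have key : ∀ n : ℕ, ∀ Γ ⊆ F, Γ.Nonempty → Γ.card ≤ n → collE Γ = 2*(a:ℤ) := by
      intro n
      induction n with
      | zero =>
        intro Γ _ hne hc
        exact absurd (card_pos.2 hne) (by omega)
      | succ n ih =>
        intro Γ hΓF hne hc
        by_cases h1 : Γ.card = 1
        · obtain ⟨S, rfl⟩ := card_eq_one.1 h1
          rw [collE_singleton, hsize S (hΓF (mem_singleton_self S))]
        · have h2 : 2 ≤ Γ.card := by
            have := card_pos.2 hne; omega
          obtain ⟨Γ₁, Γ₂, hun, hdisj, hne₁, hne₂, hbalance⟩ := hbal Γ hΓF h2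
          have hsub : ∀ Δ ⊆ Γ₁ ∪ Γ₂, Δ.Nonempty → Δ ≠ Γ₁ ∪ Γ₂ → collE Δ = 2*(a:ℤ) := by
            intro Δ hΔ hΔne hΔneq
            apply ih Δ (by rw [hun] at hΔ; exact hΔ.trans hΓF) hΔne
            have : Δ ⊂ Γ₁ ∪ Γ₂ := Finset.ssubset_iff_subset_ne.2 ⟨hΔ, hΔneq⟩
            have := card_lt_card this
            rw [hun] at this
            omega
          have hmain := hkeMain Γ₁ Γ₂ a hne₁ hne₂ hdisj hsub
          rw [hun] at hmain
          rw [hbalance] at hmain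
          have h0 : (0:ℤ) = (-1:ℤ)^(Γ₂.card - 1) * (collE Γ - 2*(a:ℤ)) := by
            rw [← hmain]; ring
          have hpow : (-1:ℤ)^(Γ₂.card - 1) ≠ 0 := by
            apply pow_ne_zero; norm_num
          have := mul_eq_zero.1 h0.symm
          rcases this with h | h
          · exact absurd h hpow
          · linarith
    intro Γ hΓF hne
    exact key Γ.card Γ hΓF hne le_rfl
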